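/- Let L : ℝ^d → ℝ^𝒴 be a polyhedral loss that embeds a discrete loss ℓ : ℛ → ℝ^𝒴. Then there exists a link function ψ : ℝ^d → ℛ such that (L, ψ) is calibrated with respect to ℓ. -/

import Mathlib

/-- The probability simplex over a finite outcome set `Y`. -/
def probSimplex (Y : Type*) [Fintype Y] : Set (Y → ℝ) :=
  {p | (∀ y, 0 ≤ p y) ∧ ∑ y, p y = 1}

/-- Expected loss `⟨p, v⟩ = ∑ y, p y * v y`. -/
def elloss {Y : Type*} [Fintype Y] (p : Y → ℝ) (v : Y → ℝ) : ℝ :=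
  ∑ y, p y * v y

/-- `u` minimizes the expected loss `⟨p, L ·⟩` over the report set. -/
def Minimizes {U Y : Type*} [Fintype Y] (p : Y → ℝ) (L : U → Y → ℝ) (u : U) : Prop :=
  ∀ u' : U, elloss p (L u) ≤ elloss p (L u')

/-- The Bayes risk `inf_u ⟨p, L u⟩`. -/
noncomputable def bayesRisk {U Y : Type*} [Fintype Y] (p : Y → ℝ) (L : U → Y → ℝ) : ℝ :=
  sInf (Set.range fun u => elloss p (L u))

/-- `L` embeds the discrete loss `ℓ`. -/
def Embeds {R Y : Type*} [Fintype Y] {d : ℕ}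
    (L : (Fin d → ℝ) → Y → ℝ) (ℓ : R → Y → ℝ) : Prop :=
  ∃ φ : R → (Fin d → ℝ), Function.Injective φ ∧ (∀ r, L (φ r) = ℓ r) ∧
    ∀ p ∈ probSimplex Y, ∀ r, Minimizes p ℓ r ↔ Minimizes p L (φ r)

/-- A polyhedral convex function: a pointwise maximum of finitely many affine functions. -/
def IsPolyhedralFn {d : ℕ} (g : (Fin d → ℝ) → ℝ) : Prop :=
  ∃ (m : ℕ) (a : Fin (m + 1) → Fin d → ℝ) (b : Fin (m + 1) → ℝ),
    ∀ x, g x = Finset.univ.sup' Finset.univ_nonempty (fun i => ∑ j, a i j * x j + b i)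

/-- `(L, ψ)` is calibrated with respect to `ℓ`: for each `p` in the simplex, the infimum of
expected surrogate loss over reports linking outside `argmin ⟨p, ℓ ·⟩` is strictly greater
than the overall infimum (equivalently, exceeds it by some `ε > 0`; the condition is vacuous,
i.e. `inf ∅ = +∞`, when no report links to an incorrect prediction). -/
def Calibrated {R Y : Type*} [Fintype Y] {d : ℕ}
    (L : (Fin d → ℝ) → Y → ℝ) (ℓ : R → Y → ℝ) (ψ : (Fin d → ℝ) → R) : Prop :=
  ∀ p ∈ probSimplex Y, ∃ ε > 0, ∀ u : Fin d → ℝ,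
    ¬ Minimizes p ℓ (ψ u) → bayesRisk p L + ε ≤ elloss p (L u)

set_option linter.unusedSectionVars false
namespace FFW
universe u v

/-- Fourier–Motzkin elimination step: eliminate the last variable. -/
theorem fmStep {n : ℕ} {ι : Type u} [Fintype ι] (a : ι → Fin (n+1) → ℝ) (b : ι → ℝ) :
    ∃ (κ : Type u) (_ : Fintype κ) (a' : κ → Fin n → ℝ) (b' : κ → ℝ),
      ∀ x : Fin n → ℝ, (∀ k, ∑ j, a' k j * x j ≤ b' k) ↔
        ∃ t : ℝ, ∀ i, (∑ j, a i (Fin.castSucc j) * x j) + a i (Fin.last n) * t ≤ b i := by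
  classical
  refine ⟨({i : ι // a i (Fin.last n) = 0} ⊕
      ({i : ι // 0 < a i (Fin.last n)} × {i : ι // a i (Fin.last n) < 0})), inferInstance,
    Sum.elim (fun i0 j => a i0.1 (Fin.castSucc j))
      (fun ik j => (- a ik.2.1 (Fin.last n)) * a ik.1.1 (Fin.castSucc j)
        + a ik.1.1 (Fin.last n) * a ik.2.1 (Fin.castSucc j)),
    Sum.elim (fun i0 => b i0.1)
      (fun ik => (- a ik.2.1 (Fin.last n)) * b ik.1.1 + a ik.1.1 (Fin.last n) * b ik.2.1), ?_⟩
  intro x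
  have hrow2 : ∀ (i k : ι),
      ∑ j, ((- a k (Fin.last n)) * a i (Fin.castSucc j)
          + a i (Fin.last n) * a k (Fin.castSucc j)) * x j
        = (- a k (Fin.last n)) * (∑ j, a i (Fin.castSucc j) * x j)
          + a i (Fin.last n) * (∑ j, a k (Fin.castSucc j) * x j) := by
    intro i k
    simp only [Finset.mul_sum, ← Finset.sum_add_distrib, add_mul, mul_assoc]
  constructor
  · intro H
    have hpair : ∀ (i k : ι), 0 < a i (Fin.last n) → a k (Fin.last n) < 0 →
        (b k - ∑ j, a k (Fin.castSucc j) * x j) / a k (Fin.last n)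
          ≤ (b i - ∑ j, a i (Fin.castSucc j) * x j) / a i (Fin.last n) := by
      intro i k hi hk
      have h := H (Sum.inr (⟨i, hi⟩, ⟨k, hk⟩))
      simp only [Sum.elim_inr] at h
      rw [hrow2] at h
      have hX : a k (Fin.last n) *
          ((b k - ∑ j, a k (Fin.castSucc j) * x j) / a k (Fin.last n))
          = b k - ∑ j, a k (Fin.castSucc j) * x j := mul_div_cancel₀ _ (ne_of_lt hk)
      have hY : a i (Fin.last n) *
          ((b i - ∑ j, a i (Fin.castSucc j) * x j) / a i (Fin.last n))
          = b i - ∑ j, a i (Fin.castSucc j) * x j := mul_div_cancel₀ _ (ne_of_gt hi)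
      have hpos : 0 < a i (Fin.last n) * (- a k (Fin.last n)) :=
        mul_pos hi (neg_pos.mpr hk)
      nlinarith [h, hX, hY, hpos]
    by_cases hU : ∃ i : ι, 0 < a i (Fin.last n)
    · obtain ⟨i0, hi0⟩ := hU
      haveI : Nonempty {i : ι // 0 < a i (Fin.last n)} := ⟨⟨i0, hi0⟩⟩
      set t : ℝ := Finset.univ.inf' Finset.univ_nonempty
        (fun i : {i : ι // 0 < a i (Fin.last n)} =>
          (b i.1 - ∑ j, a i.1 (Fin.castSucc j) * x j) / a i.1 (Fin.last n)) with ht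
      refine ⟨t, fun i => ?_⟩
      rcases lt_trichotomy (a i (Fin.last n)) 0 with hneg | hzero | hpos
      · have hle : (b i - ∑ j, a i (Fin.castSucc j) * x j) / a i (Fin.last n) ≤ t := by
          apply Finset.le_inf'
          intro jj _
          exact hpair jj.1 i jj.2 hneg
        have h2 : a i (Fin.last n) * t ≤ a i (Fin.last n) *
            ((b i - ∑ j, a i (Fin.castSucc j) * x j) / a i (Fin.last n)) :=
          mul_le_mul_of_nonpos_left hle (le_of_lt hneg)
        rw [mul_div_cancel₀ _ (ne_of_lt hneg)] at h2
        linarith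
      · have h := H (Sum.inl ⟨i, hzero⟩)
        simp only [Sum.elim_inl] at h
        rw [hzero]
        simpa using h
      · have hle : t ≤ (b i - ∑ j, a i (Fin.castSucc j) * x j) / a i (Fin.last n) :=
          Finset.inf'_le _ (Finset.mem_univ (⟨i, hpos⟩ : {i : ι // 0 < a i (Fin.last n)}))
        have h2 : a i (Fin.last n) * t ≤ a i (Fin.last n) *
            ((b i - ∑ j, a i (Fin.castSucc j) * x j) / a i (Fin.last n)) :=
          mul_le_mul_of_nonneg_left hle (le_of_lt hpos)
        rw [mul_div_cancel₀ _ (ne_of_gt hpos)] at h2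
        linarith
    · push_neg at hU
      by_cases hLo : ∃ k : ι, a k (Fin.last n) < 0
      · obtain ⟨k0, hk0⟩ := hLo
        haveI : Nonempty {i : ι // a i (Fin.last n) < 0} := ⟨⟨k0, hk0⟩⟩
        set t : ℝ := Finset.univ.sup' Finset.univ_nonempty
          (fun k : {i : ι // a i (Fin.last n) < 0} =>
            (b k.1 - ∑ j, a k.1 (Fin.castSucc j) * x j) / a k.1 (Fin.last n)) with ht
        refine ⟨t, fun i => ?_⟩
        rcases lt_trichotomy (a i (Fin.last n)) 0 with hneg | hzero | hpos
        · have hle : (b i - ∑ j, a i (Fin.castSucc j) * x j) / a i (Fin.last n) ≤ t := by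
            rw [ht]
            exact Finset.le_sup'
              (fun k : {i : ι // a i (Fin.last n) < 0} =>
                (b k.1 - ∑ j, a k.1 (Fin.castSucc j) * x j) / a k.1 (Fin.last n))
              (Finset.mem_univ (⟨i, hneg⟩ : {i : ι // a i (Fin.last n) < 0}))
          have h2 : a i (Fin.last n) * t ≤ a i (Fin.last n) *
              ((b i - ∑ j, a i (Fin.castSucc j) * x j) / a i (Fin.last n)) :=
            mul_le_mul_of_nonpos_left hle (le_of_lt hneg)
          rw [mul_div_cancel₀ _ (ne_of_lt hneg)] at h2
          linarith
        · have h := H (Sum.inl ⟨i, hzero⟩)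
          simp only [Sum.elim_inl] at h
          rw [hzero]
          simpa using h
        · exact absurd hpos (not_lt.mpr (hU i))
      · push_neg at hLo
        refine ⟨0, fun i => ?_⟩
        have hz : a i (Fin.last n) = 0 := le_antisymm (hU i) (hLo i)
        have h := H (Sum.inl ⟨i, hz⟩)
        simp only [Sum.elim_inl] at h
        rw [hz]
        simpa using h
  · rintro ⟨t, H⟩ k
    rcases k with i0 | ⟨i, k⟩
    · simp only [Sum.elim_inl]
      have h := H i0.1
      rw [i0.2] at h
      simpa using h
    · simp only [Sum.elim_inr]
      rw [hrow2]
      have hi := H i.1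
      have hk := H k.1
      have hi2 := i.2
      have hk2 := k.2
      nlinarith [hi, hk, hi2, hk2]



lemma sum_snoc (N : ℕ) (g : Fin (N+1) → ℝ) (f : Fin N → ℝ) (t : ℝ) :
    ∑ j : Fin (N+1), g j * Fin.snoc (α := fun _ => ℝ) f t j
      = (∑ j : Fin N, g (Fin.castSucc j) * f j) + g (Fin.last N) * t := by
  rw [Fin.sum_univ_castSucc (f := fun j => g j * Fin.snoc (α := fun _ => ℝ) f t j)]
  simp

lemma sum_split (N : ℕ) (g f : Fin (N+1) → ℝ) :
    ∑ j : Fin (N+1), g j * f j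
      = (∑ j : Fin N, g (Fin.castSucc j) * f (Fin.castSucc j)) + g (Fin.last N) * f (Fin.last N) := by
  rw [Fin.sum_univ_castSucc (f := fun j => g j * f j)]

/-- Projection of a polyhedron onto its first `n` coordinates is a polyhedron. -/
theorem projPoly {n : ℕ} (m : ℕ) {ι : Type u} [iF : Fintype ι] (a : ι → Fin (n+m) → ℝ) (b : ι → ℝ) :
    ∃ (κ : Type u) (_ : Fintype κ) (a' : κ → Fin n → ℝ) (b' : κ → ℝ),
      ∀ x : Fin n → ℝ, (∀ k, ∑ j, a' k j * x j ≤ b' k) ↔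
        ∃ f : Fin (n+m) → ℝ, (∀ j : Fin n, f (Fin.castAdd m j) = x j) ∧
          (∀ i, ∑ j, a i j * f j ≤ b i) := by
  induction m generalizing ι with
  | zero =>
    refine ⟨ι, inferInstance, fun i j => a i (Fin.castAdd 0 j), b, fun x => ?_⟩
    have hcast : ∀ j : Fin n, Fin.castAdd 0 j = j := fun j => Fin.ext rfl
    constructor
    · intro H
      refine ⟨x, fun j => by rw [hcast], fun i => ?_⟩
      have := H i
      simpa [hcast] using this
    · rintro ⟨f, hagree, hrows⟩ k
      calc ∑ j, a k (Fin.castAdd 0 j) * x j = ∑ j : Fin (n+0), a k j * f j := by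
            apply Finset.sum_congr rfl
            intro j _
            rw [← hagree j, hcast]
        _ ≤ b k := hrows k
  | succ m ih =>
    obtain ⟨κ₁, hκ₁, a₁, b₁, h₁⟩ := fmStep (n := n + m) a b
    obtain ⟨κ, hκ, a', b', h⟩ := ih a₁ b₁
    refine ⟨κ, hκ, a', b', fun x => ?_⟩
    rw [h]
    constructor
    · rintro ⟨f₁, hagree₁, hrows₁⟩
      rw [h₁] at hrows₁
      obtain ⟨t, ht⟩ := hrows₁
      refine ⟨Fin.snoc f₁ t, fun j => ?_, fun i => ?_⟩
      · show Fin.snoc (α := fun _ => ℝ) f₁ t (Fin.castSucc (Fin.castAdd m j)) = x j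
        rw [Fin.snoc_castSucc]
        exact hagree₁ j
      · exact le_trans (le_of_eq (sum_snoc (n+m) (a i) f₁ t)) (ht i)
    · rintro ⟨f, hagree, hrows⟩
      refine ⟨fun j => f (Fin.castSucc j), fun j => ?_, ?_⟩
      · show f (Fin.castSucc (Fin.castAdd m j)) = x j
        exact hagree j
      · rw [h₁]
        exact ⟨f (Fin.last (n+m)),
          fun i => le_trans (le_of_eq (sum_split (n+m) (a i) f).symm) (hrows i)⟩

/-- 1-D projection: keep one distinguished variable `t`, eliminate finitely many others. -/
theorem proj1D {ν : Type u} [Fintype ν] {ι : Type v} [Fintype ι]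
    (c : ι → ℝ) (A : ι → ν → ℝ) (b : ι → ℝ) :
    ∃ (κ : Type v) (_ : Fintype κ) (c' : κ → ℝ) (b' : κ → ℝ),
      ∀ t : ℝ, (∀ k, c' k * t ≤ b' k) ↔
        ∃ w : ν → ℝ, ∀ i, c i * t + ∑ v, A i v * w v ≤ b i := by
  classical
  set M := Fintype.card ν with hM
  set e := Fintype.equivFin ν with he
  set aH : ι → Fin (1 + M) → ℝ := fun i =>
    Fin.addCases (fun _ => c i) (fun v' => A i (e.symm v')) with haH
  have hsplit : ∀ (i : ι) (f : Fin (1 + M) → ℝ),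
      ∑ j, aH i j * f j
        = c i * f (Fin.castAdd M 0) + ∑ j : Fin M, A i (e.symm j) * f (Fin.natAdd 1 j) := by
    intro i f
    rw [Fin.sum_univ_add (f := fun j => aH i j * f j), Fin.sum_univ_one]
    have h1 : aH i (Fin.castAdd M 0) = c i := by simp [haH]
    have h2 : ∀ j : Fin M, aH i (Fin.natAdd 1 j) = A i (e.symm j) := by
      intro j; simp [haH]
    rw [h1]
    exact congrArg _ (Finset.sum_congr rfl fun j _ => by rw [h2 j])
  obtain ⟨κ, hκ, a', b', h⟩ := projPoly (n := 1) M aH b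
  refine ⟨κ, hκ, fun k => a' k 0, b', fun t => ?_⟩
  have key : ∀ k, a' k 0 * t = ∑ j : Fin 1, a' k j * (fun _ : Fin 1 => t) j := by
    intro k; rw [Fin.sum_univ_one]
  constructor
  · intro H
    have H' : ∀ k, ∑ j : Fin 1, a' k j * (fun _ : Fin 1 => t) j ≤ b' k := by
      intro k; rw [← key]; exact H k
    obtain ⟨f, hagree, hrows⟩ := (h (fun _ => t)).mp H'
    refine ⟨fun v => f (Fin.natAdd 1 (e v)), fun i => ?_⟩
    have hsum := hrows i
    rw [hsplit] at hsum
    rw [hagree 0] at hsum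
    have h2 : ∑ j : Fin M, A i (e.symm j) * f (Fin.natAdd 1 j)
        = ∑ v : ν, A i v * f (Fin.natAdd 1 (e v)) := by
      rw [← Equiv.sum_comp e (fun j => A i (e.symm j) * f (Fin.natAdd 1 j))]
      apply Finset.sum_congr rfl
      intro v _
      rw [Equiv.symm_apply_apply]
    rw [h2] at hsum
    exact hsum
  · rintro ⟨w, hw⟩
    have H' := (h (fun _ => t)).mpr ?_
    · intro k
      rw [key]
      exact H' k
    · refine ⟨Fin.addCases (fun _ => t) (fun j => w (e.symm j)), fun j => ?_, fun i => ?_⟩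
      · have : (0 : Fin 1) = j := Subsingleton.elim _ _
        rw [← this]
        simp
      · rw [hsplit]
        have h1 : Fin.addCases (motive := fun _ => ℝ) (fun _ : Fin 1 => t)
            (fun j => w (e.symm j)) (Fin.castAdd M 0) = t := Fin.addCases_left _
        have h2 : ∑ j : Fin M, A i (e.symm j) *
            Fin.addCases (motive := fun _ => ℝ) (fun _ : Fin 1 => t)
              (fun j => w (e.symm j)) (Fin.natAdd 1 j) = ∑ v : ν, A i v * w v := by
          have : ∀ j : Fin M, Fin.addCases (motive := fun _ => ℝ) (fun _ : Fin 1 => t)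
              (fun j => w (e.symm j)) (Fin.natAdd 1 j) = w (e.symm j) := by
            intro j; simp
          rw [Finset.sum_congr rfl (fun j _ => by rw [this j])]
          rw [← Equiv.sum_comp e (fun j => A i (e.symm j) * w (e.symm j))]
          apply Finset.sum_congr rfl
          intro v _
          rw [Equiv.symm_apply_apply]
        rw [h1, h2]
        exact hw i

/-- A nonempty finite 1-D system contained in `(γ,∞)` is bounded away from `γ`. -/
theorem oneDim {κ : Type u} [Fintype κ] (c b : κ → ℝ) (γ : ℝ)
    (h : ∀ t, (∀ k, c k * t ≤ b k) → γ < t) :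
    ∃ α, γ < α ∧ ∀ t, (∀ k, c k * t ≤ b k) → α ≤ t := by
  classical
  by_cases hS : ∃ t, ∀ k, c k * t ≤ b k
  · obtain ⟨s, hs⟩ := hS
    have hγs : γ < s := h s hs
    by_cases hNeg : ∃ k, c k < 0
    · obtain ⟨k0, hk0⟩ := hNeg
      haveI : Nonempty {k : κ // c k < 0} := ⟨⟨k0, hk0⟩⟩
      set α : ℝ := Finset.univ.sup' Finset.univ_nonempty
        (fun k : {k : κ // c k < 0} => b k.1 / c k.1) with hα
      have hlb : ∀ t, (∀ k, c k * t ≤ b k) → α ≤ t := by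
        intro t ht
        rw [hα]
        apply Finset.sup'_le
        intro k _
        have := ht k.1
        rw [div_le_iff_of_neg k.2]
        linarith [this]
      refine ⟨α, ?_, hlb⟩
      by_contra hcon
      push_neg at hcon
      have hγS : ∀ k, c k * γ ≤ b k := by
        intro k
        rcases lt_or_ge (c k) 0 with hneg | hpos
        · have : b k / c k ≤ α := by
            rw [hα]
            exact Finset.le_sup' (fun k : {k : κ // c k < 0} => b k.1 / c k.1)
              (Finset.mem_univ (⟨k, hneg⟩ : {k : κ // c k < 0}))
          have h2 : b k / c k ≤ γ := le_trans this hcon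
          rw [div_le_iff_of_neg hneg] at h2
          linarith
        · have h1 : c k * γ ≤ c k * s := mul_le_mul_of_nonneg_left (le_of_lt hγs) hpos
          linarith [hs k]
      exact absurd (h γ hγS) (lt_irrefl γ)
    · push_neg at hNeg
      exfalso
      have hγS : ∀ k, c k * γ ≤ b k := by
        intro k
        have h1 : c k * γ ≤ c k * s := mul_le_mul_of_nonneg_left (le_of_lt hγs) (hNeg k)
        linarith [hs k]
      exact absurd (h γ hγS) (lt_irrefl γ)
  · push_neg at hS
    exact ⟨γ + 1, by linarith,
      fun t ht => absurd (ht (hS t).choose) (not_le.mpr (hS t).choose_spec)⟩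

/-- Combining finitely many conditional lower bounds. -/
theorem exists_pos_bound_of_finite {ι : Type u} {A : Type v} [Fintype ι] (Q : ι → A → Prop) (F : A → ℝ)
    (c : ℝ) (h : ∀ i, ∃ η, 0 < η ∧ ∀ x, Q i x → c + η ≤ F x) :
    ∃ η, 0 < η ∧ ∀ x, (∃ i, Q i x) → c + η ≤ F x := by
  classical
  choose η hpos hb using h
  by_cases hne : Nonempty ι
  · refine ⟨Finset.univ.inf' Finset.univ_nonempty η, ?_, ?_⟩
    · rw [Finset.lt_inf'_iff]
      intro i _
      exact hpos i
    · rintro x ⟨i, hQ⟩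
      have h1 : Finset.univ.inf' Finset.univ_nonempty η ≤ η i :=
        Finset.inf'_le _ (Finset.mem_univ i)
      linarith [hb i x hQ]
  · exact ⟨1, one_pos, fun x ⟨i, _⟩ => absurd ⟨i⟩ hne⟩

theorem exists_pos_le_of_finite {ι : Type u} [Fintype ι] (v : ι → ℝ) (h : ∀ i, 0 < v i) :
    ∃ ε, 0 < ε ∧ ∀ i, ε ≤ v i := by
  classical
  by_cases hne : Nonempty ι
  · refine ⟨Finset.univ.inf' Finset.univ_nonempty v, ?_, fun i => Finset.inf'_le _ (Finset.mem_univ i)⟩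
    rw [Finset.lt_inf'_iff]
    exact fun i _ => h i
  · exact ⟨1, one_pos, fun i => absurd ⟨i⟩ hne⟩



end FFW

namespace FFW
lemma sum_pick {α : Type u} [Fintype α] [DecidableEq α] (a₀ : α) (s : α → ℝ) (w : α → ℝ) :
    ∑ x, (if x = a₀ then s x else 0) * w x = s a₀ * w a₀ := by
  rw [Finset.sum_eq_single a₀]
  · simp
  · intro x _ hx
    simp [hx]
  · intro h
    exact absurd (Finset.mem_univ a₀) h
end FFW

namespace FFW

section Loss
attribute [local instance] Classical.propDecidable

variable {Y : Type*} [Fintype Y] {d : ℕ}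

def Near (ε : ℝ) (u : Fin d → ℝ) (G : Set (Fin d → ℝ)) : Prop :=
  ∃ x ∈ G, ∀ j, |u j - x j| ≤ ε

variable (mm : Y → ℕ) (aa : ∀ y : Y, Fin (mm y + 1) → Fin d → ℝ) (bb : ∀ y : Y, Fin (mm y + 1) → ℝ)

def gg (y : Y) (i : Fin (mm y + 1)) (u : Fin d → ℝ) : ℝ := (∑ j, aa y i j * u j) + bb y i

abbrev PatIdx := Σ y : Y, Fin (mm y + 1) × Fin (mm y + 1)

noncomputable def patt (u : Fin d → ℝ) : PatIdx mm → Bool := fun e =>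
  decide (gg mm aa bb e.1 e.2.2 u ≤ gg mm aa bb e.1 e.2.1 u)

def WSet (s : PatIdx mm → Bool) : Set (Fin d → ℝ) :=
  {u | ∀ e : PatIdx mm, s e = true → gg mm aa bb e.1 e.2.2 u ≤ gg mm aa bb e.1 e.2.1 u}

lemma mem_WSet_patt_self (u : Fin d → ℝ) : u ∈ WSet mm aa bb (patt mm aa bb u) :=
  fun _ he => of_decide_eq_true he

lemma gg_comb (y : Y) (i : Fin (mm y + 1)) (t : ℝ) (u₀ v : Fin d → ℝ) :
    gg mm aa bb y i (fun j => u₀ j + t * (u₀ j - v j))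
      = (1+t) * gg mm aa bb y i u₀ - t * gg mm aa bb y i v := by
  simp only [gg]
  have hterm : ∀ j ∈ (Finset.univ : Finset (Fin d)),
      aa y i j * (u₀ j + t * (u₀ j - v j))
        = (1+t) * (aa y i j * u₀ j) - t * (aa y i j * v j) := fun j _ => by ring
  rw [Finset.sum_congr rfl hterm, Finset.sum_sub_distrib, ← Finset.mul_sum, ← Finset.mul_sum]
  ring

lemma sum_p_gg (p : Y → ℝ) (σ : ∀ y : Y, Fin (mm y + 1)) (u : Fin d → ℝ) :
    ∑ y, p y * gg mm aa bb y (σ y) u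
      = (∑ j, (∑ y, p y * aa y (σ y) j) * u j) + ∑ y, p y * bb y (σ y) := by
  simp only [gg, mul_add, Finset.sum_add_distrib]
  congr 1
  calc ∑ y, p y * ∑ j, aa y (σ y) j * u j
      = ∑ y, ∑ j, p y * aa y (σ y) j * u j := by
        refine Finset.sum_congr rfl fun y _ => ?_
        rw [Finset.mul_sum]
        exact Finset.sum_congr rfl fun j _ => by ring
    _ = ∑ j, ∑ y, p y * aa y (σ y) j * u j := Finset.sum_comm
    _ = ∑ j, (∑ y, p y * aa y (σ y) j) * u j := by
        refine Finset.sum_congr rfl fun j _ => ?_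
        rw [Finset.sum_mul]

variable (L : (Fin d → ℝ) → Y → ℝ)
variable (hg : ∀ (u : Fin d → ℝ) (y : Y),
  L u y = Finset.univ.sup' Finset.univ_nonempty (fun i => gg mm aa bb y i u))

include hg

lemma gg_le_L (u : Fin d → ℝ) (y : Y) (i : Fin (mm y + 1)) :
    gg mm aa bb y i u ≤ L u y := by
  rw [hg]
  exact Finset.le_sup' (fun i => gg mm aa bb y i u) (Finset.mem_univ i)

lemma exists_argmax (u : Fin d → ℝ) (y : Y) :
    ∃ i, (∀ i', gg mm aa bb y i' u ≤ gg mm aa bb y i u) ∧ L u y = gg mm aa bb y i u := by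
  obtain ⟨i, _, hmax⟩ := Finset.exists_max_image Finset.univ
    (fun i => gg mm aa bb y i u) ⟨0, Finset.mem_univ 0⟩
  refine ⟨i, fun i' => hmax i' (Finset.mem_univ i'), le_antisymm ?_ (gg_le_L mm aa bb L hg u y i)⟩
  rw [hg]
  exact Finset.sup'_le _ _ fun i' _ => hmax i' (Finset.mem_univ i')

lemma sum_gg_le (p : Y → ℝ) (hp : ∀ y, 0 ≤ p y) (σ : ∀ y : Y, Fin (mm y + 1)) (u : Fin d → ℝ) :
    ∑ y, p y * gg mm aa bb y (σ y) u ≤ elloss p (L u) :=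
  Finset.sum_le_sum fun y _ =>
    mul_le_mul_of_nonneg_left (gg_le_L mm aa bb L hg u y (σ y)) (hp y)

lemma exists_sum_gg_eq (p : Y → ℝ) (u : Fin d → ℝ) :
    ∃ σ : ∀ y : Y, Fin (mm y + 1), elloss p (L u) = ∑ y, p y * gg mm aa bb y (σ y) u := by
  choose σ hmax hval using exists_argmax mm aa bb L hg u
  exact ⟨σ, Finset.sum_congr rfl fun y _ => by rw [hval y]⟩

lemma affine_on_W (p : Y → ℝ) (u₀ : Fin d → ℝ) :
    ∃ (aW : Fin d → ℝ) (bW : ℝ),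
      ∀ u ∈ WSet mm aa bb (patt mm aa bb u₀),
        elloss p (L u) = (∑ j, aW j * u j) + bW := by
  choose σ hmax hval using exists_argmax mm aa bb L hg u₀
  refine ⟨fun j => ∑ y, p y * aa y (σ y) j, ∑ y, p y * bb y (σ y), fun u hu => ?_⟩
  rw [← sum_p_gg]
  refine Finset.sum_congr rfl fun y _ => ?_
  congr 1
  have hmaxu : ∀ i', gg mm aa bb y i' u ≤ gg mm aa bb y (σ y) u := by
    intro i'
    refine hu ⟨y, (σ y, i')⟩ ?_
    exact decide_eq_true (hmax y i')
  refine le_antisymm ?_ (gg_le_L mm aa bb L hg u y (σ y))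
  rw [hg]
  exact Finset.sup'_le _ _ fun i' _ => hmaxu i'

lemma W_subset_argmin (p : Y → ℝ) (u₀ : Fin d → ℝ) (h0 : Minimizes p L u₀) :
    ∀ v ∈ WSet mm aa bb (patt mm aa bb u₀), Minimizes p L v := by
  intro v hv
  set D : PatIdx mm → (Fin d → ℝ) → ℝ :=
    fun e u => gg mm aa bb e.1 e.2.1 u - gg mm aa bb e.1 e.2.2 u with hD
  set Ep : Finset (PatIdx mm) :=
    Finset.univ.filter (fun e => patt mm aa bb u₀ e = true ∧ D e u₀ < D e v) with hEp
  have hpos : ∀ e ∈ Ep, 0 < D e u₀ := by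
    intro e he
    rw [hEp, Finset.mem_filter] at he
    obtain ⟨-, he1, he2⟩ := he
    have h1 : 0 ≤ D e u₀ := by
      have := of_decide_eq_true he1
      simp only [hD]; linarith
    rcases lt_or_eq_of_le h1 with h | h
    · exact h
    · exfalso
      have hrev : patt mm aa bb u₀ ⟨e.1, (e.2.2, e.2.1)⟩ = true := by
        apply decide_eq_true
        simp only [hD] at h
        linarith [of_decide_eq_true he1]
      have := hv ⟨e.1, (e.2.2, e.2.1)⟩ hrev
      simp only [hD] at he2 h
      simp only at this
      linarith
  set tf : PatIdx mm → ℝ := fun e => D e u₀ / (D e v - D e u₀) with htf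
  have hEx : ∃ t : ℝ, 0 < t ∧ ∀ e ∈ Ep, t * (D e v - D e u₀) ≤ D e u₀ := by
    by_cases hne : Ep.Nonempty
    · refine ⟨Ep.inf' hne tf, ?_, ?_⟩
      · rw [Finset.lt_inf'_iff]
        intro e he
        have hd : 0 < D e v - D e u₀ := by
          rw [hEp, Finset.mem_filter] at he
          linarith [he.2.2]
        exact div_pos (hpos e he) hd
      · intro e he
        have hd : 0 < D e v - D e u₀ := by
          rw [hEp, Finset.mem_filter] at he
          linarith [he.2.2]
        have h1 : Ep.inf' hne tf ≤ tf e := Finset.inf'_le _ he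
        have h2 : tf e * (D e v - D e u₀) = D e u₀ := by
          rw [htf]
          exact div_mul_cancel₀ _ (ne_of_gt hd)
        nlinarith [h1, hd]
    · refine ⟨1, one_pos, fun e he => ?_⟩
      exact absurd ⟨e, he⟩ hne
  obtain ⟨t, ht0, htb⟩ := hEx
  set z : Fin d → ℝ := fun j => u₀ j + t * (u₀ j - v j) with hz
  have hzW : z ∈ WSet mm aa bb (patt mm aa bb u₀) := by
    intro e he
    have hcomb1 := gg_comb mm aa bb e.1 e.2.1 t u₀ v
    have hcomb2 := gg_comb mm aa bb e.1 e.2.2 t u₀ v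
    rw [hz]
    rw [hcomb1, hcomb2]
    by_cases hin : e ∈ Ep
    · have := htb e hin
      have h0' := hpos e hin
      simp only [hD] at this h0'
      linarith
    · rw [hEp, Finset.mem_filter] at hin
      push_neg at hin
      have hDle : D e v ≤ D e u₀ := hin (Finset.mem_univ e) he
      have h1 : 0 ≤ D e u₀ := by
        have := of_decide_eq_true he
        simp only [hD]; linarith
      simp only [hD] at hDle h1
      nlinarith
  obtain ⟨aW, bW, hrep⟩ := affine_on_W mm aa bb L hg p u₀
  have hlin : elloss p (L z) = (1+t) * elloss p (L u₀) - t * elloss p (L v) := by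
    rw [hrep z hzW, hrep u₀ (mem_WSet_patt_self mm aa bb u₀), hrep v hv]
    rw [hz]
    have : ∀ j, aW j * (u₀ j + t * (u₀ j - v j))
        = (1+t) * (aW j * u₀ j) - t * (aW j * v j) := fun j => by ring
    rw [Finset.sum_congr rfl fun j _ => this j, Finset.sum_sub_distrib,
      ← Finset.mul_sum, ← Finset.mul_sum]
    ring
  have hmin := h0 z
  rw [hlin] at hmin
  have hvle : elloss p (L v) ≤ elloss p (L u₀) := by nlinarith
  exact fun w => le_trans hvle (h0 w)

end Loss
end FFW


/-- A polyhedral loss that embeds a discrete loss `ℓ` admits a link function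
`ψ` such that `(L, ψ)` is calibrated with respect to `ℓ`. -/
theorem polyhedral_embedding_admits_calibrated_link
    {Y R : Type*} [Fintype Y] [Fintype R] [Nonempty R] {d : ℕ}
    (L : (Fin d → ℝ) → Y → ℝ) (hL0 : ∀ u y, 0 ≤ L u y)
    (hpoly : ∀ y, IsPolyhedralFn (fun u => L u y))
    (ℓ : R → Y → ℝ) (hℓ0 : ∀ r y, 0 ≤ ℓ r y)
    (hembed : Embeds L ℓ) :
    ∃ ψ : (Fin d → ℝ) → R, Calibrated L ℓ ψ := by
  classical
  obtain ⟨φ, hφinj, hφL, hφmin⟩ := hembed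
  choose mm aa bb' hg' using hpoly
  set bb : ∀ y : Y, Fin (mm y + 1) → ℝ := bb' with hbb
  have hg : ∀ (u : Fin d → ℝ) (y : Y),
      L u y = Finset.univ.sup' Finset.univ_nonempty (fun i => FFW.gg mm aa bb y i u) :=
    fun u y => hg' y u
  set Gam : (Y → ℝ) → Set (Fin d → ℝ) := fun p => {u | Minimizes p L u} with hGamDef
  -- discrete minimizer and its embedded point
  have hrp : ∀ p ∈ probSimplex Y, ∃ r : R, Minimizes p ℓ r := by
    intro p _
    obtain ⟨r, _, hr⟩ := Finset.exists_min_image Finset.univ (fun r => elloss p (ℓ r))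
      ⟨Classical.arbitrary R, Finset.mem_univ _⟩
    exact ⟨r, fun r' => hr r' (Finset.mem_univ r')⟩
  set rp : (Y → ℝ) → R := fun p => if h : ∃ r : R, Minimizes p ℓ r then h.choose
    else Classical.arbitrary R with hrpDef
  have hrpMin : ∀ p ∈ probSimplex Y, Minimizes p ℓ (rp p) := by
    intro p hp
    rw [hrpDef]
    simp only
    rw [dif_pos (hrp p hp)]
    exact (hrp p hp).choose_spec
  have hmsrc : ∀ p ∈ probSimplex Y, Minimizes p L (φ (rp p)) := fun p hp =>
    (hφmin p hp (rp p)).mp (hrpMin p hp)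
  set mv : (Y → ℝ) → ℝ := fun p => elloss p (L (φ (rp p))) with hmvDef
  have hmv_min : ∀ p ∈ probSimplex Y, ∀ u, mv p ≤ elloss p (L u) := fun p hp => hmsrc p hp
  have hbayes : ∀ p ∈ probSimplex Y, bayesRisk p L = mv p := by
    intro p hp
    exact IsLeast.csInf_eq ⟨⟨φ (rp p), rfl⟩, fun x ⟨u, hu⟩ => hu ▸ hmv_min p hp u⟩
  have hGamIff : ∀ p ∈ probSimplex Y, ∀ u, u ∈ Gam p ↔ elloss p (L u) ≤ mv p := by
    intro p hp u
    constructor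
    · intro h; exact h (φ (rp p))
    · intro h u'; exact le_trans h (hmv_min p hp u')
  have hGamNe : ∀ p ∈ probSimplex Y, (φ (rp p)) ∈ Gam p := fun p hp => hmsrc p hp
  -- row representation of Gam p
  have hrows : ∀ p ∈ probSimplex Y, ∀ u, u ∈ Gam p ↔
      ∀ σ : ∀ y : Y, Fin (mm y + 1), ∑ y, p y * FFW.gg mm aa bb y (σ y) u ≤ mv p := by
    intro p hp u
    constructor
    · intro h σ
      exact le_trans (FFW.sum_gg_le mm aa bb L hg p hp.1 σ u) ((hGamIff p hp u).mp h)
    · intro h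
      obtain ⟨σ, hσ⟩ := FFW.exists_sum_gg_eq mm aa bb L hg p u
      exact (hGamIff p hp u).mpr (le_trans (le_of_eq hσ) (h σ))
  -- coefficient form
  set AΓ : (Y → ℝ) → (∀ y : Y, Fin (mm y + 1)) → Fin d → ℝ :=
    fun p σ j => ∑ y, p y * aa y (σ y) j with hAΓ
  set CΓ : (Y → ℝ) → (∀ y : Y, Fin (mm y + 1)) → ℝ :=
    fun p σ => mv p - ∑ y, p y * bb y (σ y) with hCΓ
  have hrows' : ∀ p ∈ probSimplex Y, ∀ u, u ∈ Gam p ↔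
      ∀ σ : ∀ y : Y, Fin (mm y + 1), ∑ j, AΓ p σ j * u j ≤ CΓ p σ := by
    intro p hp u
    rw [hrows p hp u]
    apply forall_congr'
    intro σ
    rw [FFW.sum_p_gg mm aa bb p σ u]
    constructor
    · intro h; simp only [hAΓ, hCΓ]; linarith
    · intro h; simp only [hAΓ, hCΓ] at h; linarith
  -- pattern codes determine the argmin set
  set code : (Y → ℝ) → ((FFW.PatIdx mm → Bool) → Bool) :=
    fun p s => decide (FFW.WSet mm aa bb s ⊆ Gam p) with hcodeDef
  have hGamU : ∀ p ∈ probSimplex Y,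
      Gam p = ⋃ s ∈ {s : FFW.PatIdx mm → Bool | code p s = true}, FFW.WSet mm aa bb s := by
    intro p hp
    ext u
    constructor
    · intro hu
      refine Set.mem_biUnion (show code p (FFW.patt mm aa bb u) = true from ?_)
        (FFW.mem_WSet_patt_self mm aa bb u)
      exact decide_eq_true (fun v hv => FFW.W_subset_argmin mm aa bb L hg p u hu v hv)
    · intro hu
      obtain ⟨s, hs, hus⟩ := Set.mem_iUnion₂.mp hu
      exact of_decide_eq_true hs hus
  have hGamcode : ∀ p ∈ probSimplex Y, ∀ q ∈ probSimplex Y, code p = code q → Gam p = Gam q := by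
    intro p hp q hq hpq
    rw [hGamU p hp, hGamU q hq, hpq]
  -- representatives of realized codes
  set Rep : ((FFW.PatIdx mm → Bool) → Bool) → (Y → ℝ) :=
    fun c => if h : ∃ p ∈ probSimplex Y, code p = c then h.choose else (fun _ => 0) with hRepDef
  have hRep : ∀ c, (∃ p ∈ probSimplex Y, code p = c) →
      Rep c ∈ probSimplex Y ∧ code (Rep c) = c := by
    intro c h
    rw [hRepDef]
    simp only
    rw [dif_pos h]
    exact h.choose_spec
  have hGamRep : ∀ p ∈ probSimplex Y, Gam p = Gam (Rep (code p)) := by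
    intro p hp
    obtain ⟨h1, h2⟩ := hRep (code p) ⟨p, hp, rfl⟩
    exact hGamcode p hp (Rep (code p)) h1 h2.symm
  -- pairwise intersections of values are values
  have hpair : ∀ p ∈ probSimplex Y, ∀ q ∈ probSimplex Y, (Gam p ∩ Gam q).Nonempty →
      ∃ p', p' ∈ probSimplex Y ∧ Gam p' = Gam p ∩ Gam q := by
    intro p hp q hq ⟨x, hxp, hxq⟩
    set p' : Y → ℝ := fun y => (p y + q y) / 2 with hp'Def
    have hp'mem : p' ∈ probSimplex Y := by
      constructor
      · intro y
        have := hp.1 y; have := hq.1 y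
        rw [hp'Def]; dsimp only; linarith
      · have : ∑ y, (p y + q y) / 2 = (∑ y, p y + ∑ y, q y) / 2 := by
          rw [← Finset.sum_add_distrib, Finset.sum_div]
        rw [hp'Def]; dsimp only; rw [this, hp.2, hq.2]; norm_num
    have ellin : ∀ v : Fin d → ℝ, elloss p' (L v) = (elloss p (L v) + elloss q (L v)) / 2 := by
      intro v
      show ∑ y, p' y * L v y = _
      have : ∀ y ∈ (Finset.univ : Finset Y),
          p' y * L v y = (p y * L v y + q y * L v y) / 2 := by
        intro y _
        rw [hp'Def]; dsimp only; ring
      rw [Finset.sum_congr rfl this]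
      show ∑ y, (p y * L v y + q y * L v y) / 2 = (elloss p (L v) + elloss q (L v)) / 2
      rw [← Finset.sum_div, Finset.sum_add_distrib]
      rfl
    refine ⟨p', hp'mem, ?_⟩
    ext v
    constructor
    · intro hv
      have h1 := hv x
      rw [ellin v, ellin x] at h1
      have hpv := hxp v
      have hqv := hxq v
      have hApv : elloss p (L v) ≤ elloss p (L x) := by linarith
      have hAqv : elloss q (L v) ≤ elloss q (L x) := by linarith
      exact ⟨fun w => le_trans hApv (hxp w), fun w => le_trans hAqv (hxq w)⟩
    · intro ⟨hv1, hv2⟩ w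
      rw [ellin v, ellin w]
      have := hv1 w; have := hv2 w
      linarith
  -- finite intersections of values are values
  have hInter : ∀ s : Finset ((FFW.PatIdx mm → Bool) → Bool),
      (∀ c ∈ s, ∃ p ∈ probSimplex Y, code p = c) →
      (⋂ c ∈ s, Gam (Rep c)).Nonempty → s.Nonempty →
      ∃ q, q ∈ probSimplex Y ∧ Gam q = ⋂ c ∈ s, Gam (Rep c) := by
    intro s
    induction s using Finset.induction_on with
    | empty => exact fun _ _ hne => absurd hne (by simp)
    | @insert a s ha ih =>
      intro hreal hne _
      rw [Finset.set_biInter_insert] at hne ⊢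
      have hra := hRep a (hreal a (Finset.mem_insert_self a s))
      by_cases hs : s.Nonempty
      · obtain ⟨q, hqΔ, hq⟩ := ih (fun c hc => hreal c (Finset.mem_insert_of_mem hc))
          (hne.mono Set.inter_subset_right) hs
        obtain ⟨p', hp'Δ, hp'⟩ := hpair (Rep a) hra.1 q hqΔ (by rw [hq]; exact hne)
        exact ⟨p', hp'Δ, by rw [hp', hq]⟩
      · rw [Finset.not_nonempty_iff_eq_empty] at hs
        subst hs
        exact ⟨Rep a, hra.1, by simp⟩
  -- uniform ε for the link: for every "bad" finite family of code values,
  -- no point is uniformly near all of them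
  have hBadA : ∀ A : Finset ((FFW.PatIdx mm → Bool) → Bool), ∃ εA, 0 < εA ∧
      ((A.Nonempty ∧ (∀ c ∈ A, ∃ p ∈ probSimplex Y, code p = c) ∧
          (⋂ c ∈ A, Gam (Rep c)) = ∅) →
        ∀ ε', 0 < ε' → ε' ≤ εA → ∀ u : Fin d → ℝ,
          ¬ ∀ c ∈ A, FFW.Near ε' u (Gam (Rep c))) := by
    intro A
    by_cases hbad : A.Nonempty ∧ (∀ c ∈ A, ∃ p ∈ probSimplex Y, code p = c) ∧
        (⋂ c ∈ A, Gam (Rep c)) = ∅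
    swap
    · exact ⟨1, one_pos, fun h => absurd h hbad⟩
    obtain ⟨hAne, hAreal, hAempty⟩ := hbad
    have hrepmem : ∀ c : {c // c ∈ A}, Rep c.1 ∈ probSimplex Y :=
      fun c => (hRep c.1 (hAreal c.1 c.2)).1
    set cc : (({c // c ∈ A} × (∀ y : Y, Fin (mm y + 1))) ⊕ ({c // c ∈ A} × Fin d × Bool)) → ℝ :=
      Sum.elim (fun _ => 0) (fun _ => -1) with hccDef
    set AA : (({c // c ∈ A} × (∀ y : Y, Fin (mm y + 1))) ⊕ ({c // c ∈ A} × Fin d × Bool)) →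
        ((Fin d) ⊕ ({c // c ∈ A} × Fin d)) → ℝ :=
      Sum.elim
        (fun cσ => Sum.elim (fun _ => 0)
          (fun cj => if cj.1 = cσ.1 then AΓ (Rep cσ.1.1) cσ.2 cj.2 else 0))
        (fun cjs => Sum.elim
          (fun j' => if j' = cjs.2.1 then (if cjs.2.2 then 1 else -1) else 0)
          (fun cj => if cj = (cjs.1, cjs.2.1) then (if cjs.2.2 then -1 else 1) else 0))
        with hAADef
    set bB : (({c // c ∈ A} × (∀ y : Y, Fin (mm y + 1))) ⊕ ({c // c ∈ A} × Fin d × Bool)) → ℝ :=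
      Sum.elim (fun cσ => CΓ (Rep cσ.1.1) cσ.2) (fun _ => 0) with hbBDef
    obtain ⟨κ, hκ, c1, b1, h1d⟩ := FFW.proj1D (ν := (Fin d) ⊕ ({c // c ∈ A} × Fin d)) cc AA bB
    -- row sums in usable form
    have hrowσ : ∀ (cσ : {c // c ∈ A} × (∀ y : Y, Fin (mm y + 1)))
        (w : ((Fin d) ⊕ ({c // c ∈ A} × Fin d)) → ℝ),
        ∑ v, AA (Sum.inl cσ) v * w v
          = ∑ j, AΓ (Rep cσ.1.1) cσ.2 j * w (Sum.inr (cσ.1, j)) := by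
      intro cσ w
      rw [Fintype.sum_sum_type]
      have h0 : ∑ j : Fin d, AA (Sum.inl cσ) (Sum.inl j) * w (Sum.inl j) = 0 := by
        apply Finset.sum_eq_zero
        intro j _
        simp [hAADef]
      rw [h0, zero_add, Fintype.sum_prod_type]
      rw [Finset.sum_eq_single cσ.1]
      · apply Finset.sum_congr rfl
        intro j _
        simp [hAADef]
      · intro c' _ hc'
        apply Finset.sum_eq_zero
        intro j _
        simp only [hAADef, Sum.elim_inl, Sum.elim_inr]
        rw [if_neg (by simp [hc'])]
        exact zero_mul _
      · intro h
        exact absurd (Finset.mem_univ cσ.1) h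
    have hrowjs : ∀ (cjs : {c // c ∈ A} × Fin d × Bool)
        (w : ((Fin d) ⊕ ({c // c ∈ A} × Fin d)) → ℝ),
        ∑ v, AA (Sum.inr cjs) v * w v
          = (if cjs.2.2 then w (Sum.inl cjs.2.1) - w (Sum.inr (cjs.1, cjs.2.1))
              else w (Sum.inr (cjs.1, cjs.2.1)) - w (Sum.inl cjs.2.1)) := by
      intro cjs w
      rw [Fintype.sum_sum_type]
      have h1 : ∑ j : Fin d, AA (Sum.inr cjs) (Sum.inl j) * w (Sum.inl j)
          = (if cjs.2.2 then 1 else -1) * w (Sum.inl cjs.2.1) := by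
        have := FFW.sum_pick (α := Fin d) cjs.2.1
          (fun _ => if cjs.2.2 then (1:ℝ) else -1) (fun j => w (Sum.inl j))
        rw [← this]
        apply Finset.sum_congr rfl
        intro j _
        simp [hAADef]
      have h2 : ∑ cj : {c // c ∈ A} × Fin d, AA (Sum.inr cjs) (Sum.inr cj) * w (Sum.inr cj)
          = (if cjs.2.2 then -1 else 1) * w (Sum.inr (cjs.1, cjs.2.1)) := by
        have := FFW.sum_pick (α := {c // c ∈ A} × Fin d) (cjs.1, cjs.2.1)
          (fun _ => if cjs.2.2 then (-1:ℝ) else 1) (fun cj => w (Sum.inr cj))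
        rw [← this]
        apply Finset.sum_congr rfl
        intro cj _
        simp [hAADef]
      rw [h1, h2]
      by_cases hb : cjs.2.2
      · simp [hb]; ring
      · simp [hb]; ring
    -- translation of the projected system
    have htrans : ∀ t : ℝ, (∀ k, c1 k * t ≤ b1 k) ↔
        ∃ uu : Fin d → ℝ, ∀ c : {c // c ∈ A},
          ∃ x ∈ Gam (Rep c.1), ∀ j, |uu j - x j| ≤ t := by
      intro t
      rw [h1d t]
      constructor
      · rintro ⟨w, hw⟩
        refine ⟨fun j => w (Sum.inl j), fun c => ⟨fun j => w (Sum.inr (c, j)), ?_, ?_⟩⟩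
        · rw [hrows' (Rep c.1) (hrepmem c)]
          intro σ
          have := hw (Sum.inl (c, σ))
          rw [hrowσ (c, σ) w] at this
          simpa [hccDef, hbBDef] using this
        · intro j
          have hA := hw (Sum.inr (c, j, true))
          have hB := hw (Sum.inr (c, j, false))
          rw [hrowjs (c, j, true) w] at hA
          rw [hrowjs (c, j, false) w] at hB
          simp only [hccDef, hbBDef, Sum.elim_inr, reduceIte, Bool.false_eq_true, if_false] at hA hB
          dsimp only
          rw [abs_le]
          constructor <;> linarith
      · rintro ⟨uu, huu⟩
        choose xx hxmem hxnear using huu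
        refine ⟨Sum.elim uu (fun cj => xx cj.1 cj.2), fun i => ?_⟩
        rcases i with cσ | cjs
        · rw [hrowσ cσ _]
          simp only [hccDef, hbBDef, Sum.elim_inl, Sum.elim_inr]
          have := ((hrows' (Rep cσ.1.1) (hrepmem cσ.1)) (xx cσ.1)).mp (hxmem cσ.1) cσ.2
          simpa using this
        · rw [hrowjs cjs _]
          simp only [hccDef, hbBDef, Sum.elim_inl, Sum.elim_inr]
          have := hxnear cjs.1 cjs.2.1
          rw [abs_le] at this
          by_cases hb : cjs.2.2 <;> simp [hb] <;> linarith [this.1, this.2]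
    -- system values are positive
    have hposS : ∀ t : ℝ, (∀ k, c1 k * t ≤ b1 k) → 0 < t := by
      intro t ht
      by_contra hle
      push_neg at hle
      obtain ⟨uu, huu⟩ := (htrans t).mp ht
      have : uu ∈ ⋂ c ∈ A, Gam (Rep c) := by
        apply Set.mem_biInter
        intro c hc
        obtain ⟨x, hx, hnear⟩ := huu ⟨c, hc⟩
        have : uu = x := by
          funext j
          have h1 := hnear j
          have h2 := abs_nonneg (uu j - x j)
          have : |uu j - x j| = 0 := le_antisymm (le_trans h1 hle) h2
          have := abs_eq_zero.mp this
          linarith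
        rw [this]
        exact hx
      rw [hAempty] at this
      exact this
    obtain ⟨α, hα0, hαlb⟩ := FFW.oneDim c1 b1 0 hposS
    refine ⟨α / 2, by linarith, fun _ ε' hε'0 hε'le u hNearAll => ?_⟩
    have : ∀ k, c1 k * ε' ≤ b1 k := by
      apply (htrans ε').mpr
      refine ⟨u, fun c => ?_⟩
      obtain ⟨x, hx, hnear⟩ := hNearAll c.1 c.2
      exact ⟨x, hx, hnear⟩
    have := hαlb ε' this
    linarith
  -- a single uniform ε
  choose εf hεf hεprop using hBadA
  obtain ⟨ε, hε0, hεle⟩ := FFW.exists_pos_le_of_finite εf hεf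
  -- the link
  have hM : ∀ u : Fin d → ℝ, ∃ r : R, ∀ p ∈ probSimplex Y,
      FFW.Near ε u (Gam p) → Minimizes p ℓ r := by
    intro u
    set Au : Finset ((FFW.PatIdx mm → Bool) → Bool) :=
      Finset.univ.filter (fun c => (∃ p ∈ probSimplex Y, code p = c) ∧
        FFW.Near ε u (Gam (Rep c))) with hAuDef
    have hmemAu : ∀ p ∈ probSimplex Y, FFW.Near ε u (Gam p) → code p ∈ Au := by
      intro p hp hnear
      rw [hAuDef, Finset.mem_filter]
      refine ⟨Finset.mem_univ _, ⟨p, hp, rfl⟩, ?_⟩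
      rw [← hGamRep p hp]
      exact hnear
    by_cases hne : Au.Nonempty
    · have hAureal : ∀ c ∈ Au, ∃ p ∈ probSimplex Y, code p = c := by
        intro c hc
        rw [hAuDef, Finset.mem_filter] at hc
        exact hc.2.1
      have hAunear : ∀ c ∈ Au, FFW.Near ε u (Gam (Rep c)) := by
        intro c hc
        rw [hAuDef, Finset.mem_filter] at hc
        exact hc.2.2
      have hint : (⋂ c ∈ Au, Gam (Rep c)).Nonempty := by
        rw [Set.nonempty_iff_ne_empty]
        intro hemp
        exact (hεprop Au ⟨hne, hAureal, hemp⟩ ε hε0 (hεle Au) u) hAunear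
      obtain ⟨q, hqΔ, hq⟩ := hInter Au hAureal hint hne
      refine ⟨rp q, fun p hp hnear => ?_⟩
      have h1 : φ (rp q) ∈ Gam q := hGamNe q hqΔ
      rw [hq] at h1
      have h2 : φ (rp q) ∈ Gam (Rep (code p)) := by
        have := Set.mem_iInter₂.mp h1
        exact this (code p) (hmemAu p hp hnear)
      rw [← hGamRep p hp] at h2
      exact (hφmin p hp (rp q)).mpr h2
    · refine ⟨Classical.arbitrary R, fun p hp hnear => ?_⟩
      exact absurd ⟨code p, hmemAu p hp hnear⟩ hne
  choose ψl hψ using hM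
  -- the calibration gap, for each p
  have hGap : ∀ p ∈ probSimplex Y, ∃ η, 0 < η ∧ ∀ u : Fin d → ℝ,
      ¬ FFW.Near ε u (Gam p) → mv p + η ≤ elloss p (L u) := by
    intro p hp
    set uc : ((∀ y : Y, Fin (mm y + 1)) ⊕ (Fin d × Bool)) → Fin d → ℝ :=
      Sum.elim (fun _ _ => 0)
        (fun js j' => if j' = js.1 then (if js.2 then 1 else -1) else 0) with hucDef
    set xc : ((∀ y : Y, Fin (mm y + 1)) ⊕ (Fin d × Bool)) → Fin d → ℝ :=
      Sum.elim (fun σ j => AΓ p σ j)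
        (fun js j' => if j' = js.1 then (if js.2 then -1 else 1) else 0) with hxcDef
    set A2 : ((∀ y : Y, Fin (mm y + 1)) ⊕ (Fin d × Bool)) → Fin (d + d) → ℝ :=
      fun i => Fin.addCases (uc i) (xc i) with hA2Def
    set b2 : ((∀ y : Y, Fin (mm y + 1)) ⊕ (Fin d × Bool)) → ℝ :=
      Sum.elim (fun σ => CΓ p σ) (fun _ => ε/2) with hb2Def
    obtain ⟨κg, hκg, gN, hN, hproj⟩ := FFW.projPoly (n := d) d A2 b2
    have hA2l : ∀ i (j : Fin d), A2 i (Fin.castAdd d j) = uc i j := by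
      intro i j
      rw [hA2Def]
      exact Fin.addCases_left j
    have hA2r : ∀ i (j : Fin d), A2 i (Fin.natAdd d j) = xc i j := by
      intro i j
      rw [hA2Def]
      exact Fin.addCases_right j
    have hsplit2 : ∀ i (f : Fin (d + d) → ℝ),
        ∑ j, A2 i j * f j = (∑ j : Fin d, uc i j * f (Fin.castAdd d j))
          + ∑ j : Fin d, xc i j * f (Fin.natAdd d j) := by
      intro i f
      rw [Fin.sum_univ_add (f := fun j => A2 i j * f j)]
      congr 1
      · exact Finset.sum_congr rfl fun j _ => by rw [hA2l i j]
      · exact Finset.sum_congr rfl fun j _ => by rw [hA2r i j]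
    have hmem : ∀ u : Fin d → ℝ, (∀ k, ∑ j, gN k j * u j ≤ hN k) ↔
        (∃ x ∈ Gam p, ∀ j, |u j - x j| ≤ ε/2) := by
      intro u
      rw [hproj u]
      constructor
      · rintro ⟨f, hagree, hrows2⟩
        refine ⟨fun j => f (Fin.natAdd d j), ?_, ?_⟩
        · rw [hrows' p hp]
          intro σ
          have h1 := hrows2 (Sum.inl σ)
          rw [hsplit2] at h1
          simp only [hucDef, hxcDef, hb2Def, Sum.elim_inl, zero_mul,
            Finset.sum_const_zero, zero_add] at h1
          exact h1
        · intro j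
          have hA := hrows2 (Sum.inr (j, true))
          have hB := hrows2 (Sum.inr (j, false))
          rw [hsplit2] at hA hB
          have epickA : ∀ (c : ℝ) (h : Fin d → ℝ),
              ∑ j' : Fin d, (if j' = j then c else 0) * h j' = c * h j := fun c h =>
            FFW.sum_pick j (fun _ => c) h
          simp only [hucDef, hxcDef, hb2Def, Sum.elim_inr, reduceIte,
            Bool.false_eq_true, if_false] at hA hB
          rw [epickA 1 (fun j' => f (Fin.castAdd d j')),
            epickA (-1) (fun j' => f (Fin.natAdd d j'))] at hA
          rw [epickA (-1) (fun j' => f (Fin.castAdd d j')),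
            epickA 1 (fun j' => f (Fin.natAdd d j'))] at hB
          rw [hagree j] at hA hB
          dsimp only
          rw [abs_le]
          constructor <;> linarith
      · rintro ⟨x, hx, hnear⟩
        have hca : ∀ j : Fin d, Fin.addCases (motive := fun _ => ℝ) u x (Fin.castAdd d j) = u j :=
          fun j => Fin.addCases_left j
        have hna : ∀ j : Fin d, Fin.addCases (motive := fun _ => ℝ) u x (Fin.natAdd d j) = x j :=
          fun j => Fin.addCases_right j
        refine ⟨Fin.addCases u x, fun j => hca j, fun i => ?_⟩
        · rw [hsplit2]
          rcases i with σ | js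
          · simp only [hucDef, hxcDef, hb2Def, Sum.elim_inl, zero_mul, Finset.sum_const_zero,
              zero_add]
            have heq : ∑ j, AΓ p σ j * (Fin.addCases u x : Fin (d+d) → ℝ) (Fin.natAdd d j)
                = ∑ j, AΓ p σ j * x j :=
              Finset.sum_congr rfl fun j _ => by
                show AΓ p σ j * Fin.addCases (motive := fun _ => ℝ) u x (Fin.natAdd d j) = _
                rw [hna j]
            rw [heq]
            exact ((hrows' p hp) x).mp hx σ
          · have epickA : ∀ (c : ℝ) (h : Fin d → ℝ),
                ∑ j' : Fin d, (if j' = js.1 then c else 0) * h j' = c * h js.1 := fun c h =>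
              FFW.sum_pick js.1 (fun _ => c) h
            simp only [hucDef, hxcDef, hb2Def, Sum.elim_inr]
            rw [epickA (if js.2 then 1 else -1) (fun j' => Fin.addCases (motive := fun _ => ℝ) u x (Fin.castAdd d j')),
              epickA (if js.2 then -1 else 1) (fun j' => Fin.addCases (motive := fun _ => ℝ) u x (Fin.natAdd d j'))]
            simp only [hca js.1, hna js.1]
            have := hnear js.1
            rw [abs_le] at this
            by_cases hb : js.2 <;> simp [hb] <;> linarith [this.1, this.2]
    have hmargin : ∀ k, ∀ x ∈ Gam p, (∑ j, gN k j * x j) + (ε/2) * ∑ j, |gN k j| ≤ hN k := by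
      intro k x hx
      set v : Fin d → ℝ := fun j => if 0 ≤ gN k j then ε/2 else -(ε/2) with hvDef
      have hvabs : ∀ j, |(x j + v j) - x j| ≤ ε/2 := by
        intro j
        have : x j + v j - x j = v j := by ring
        rw [this, hvDef]
        dsimp only
        by_cases h : 0 ≤ gN k j
        · rw [if_pos h, abs_of_nonneg (by linarith : (0:ℝ) ≤ ε/2)]
        · rw [if_neg h, abs_neg, abs_of_nonneg (by linarith : (0:ℝ) ≤ ε/2)]
      have hrowsAt := (hmem (fun j => x j + v j)).mpr ⟨x, hx, hvabs⟩ k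
      have hterm : ∀ j ∈ (Finset.univ : Finset (Fin d)),
          gN k j * (x j + v j) = gN k j * x j + (ε/2) * |gN k j| := by
        intro j _
        rw [hvDef]
        dsimp only
        by_cases h : 0 ≤ gN k j
        · rw [if_pos h, abs_of_nonneg h]; ring
        · rw [if_neg h, abs_of_neg (lt_of_not_ge h)]; ring
      rw [Finset.sum_congr rfl hterm, Finset.sum_add_distrib, ← Finset.mul_sum] at hrowsAt
      exact hrowsAt
    have hcase : ∀ sk : ((FFW.PatIdx mm → Bool) × κg), ∃ η, 0 < η ∧ ∀ u : Fin d → ℝ,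
        (FFW.patt mm aa bb u = sk.1 ∧ hN sk.2 < ∑ j, gN sk.2 j * u j) →
          mv p + η ≤ elloss p (L u) := by
      rintro ⟨s, k⟩
      by_cases hreal : ∃ u₀ : Fin d → ℝ, FFW.patt mm aa bb u₀ = s
      swap
      · exact ⟨1, one_pos, fun u ⟨h1, _⟩ => absurd ⟨u, h1⟩ hreal⟩
      obtain ⟨u₀, hu₀⟩ := hreal
      obtain ⟨aW, bW, hrep⟩ := FFW.affine_on_W mm aa bb L hg p u₀
      rw [hu₀] at hrep
      by_cases hgk : 0 < ∑ j, |gN k j|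
      swap
      · have hz : ∀ j, gN k j = 0 := by
          intro j
          have h1 : ∑ j, |gN k j| ≤ 0 := le_of_not_gt hgk
          have h2 := Finset.sum_le_sum (fun (j' : Fin d) (_ : j' ∈ Finset.univ) =>
            abs_nonneg (gN k j'))
          have h3 : ∀ j' ∈ (Finset.univ : Finset (Fin d)), |gN k j'| = 0 := by
            rw [← Finset.sum_eq_zero_iff_of_nonneg
              (fun j' _ => abs_nonneg (gN k j'))]
            simp only [Finset.sum_const_zero] at h2
            linarith
          exact abs_eq_zero.mp (h3 j (Finset.mem_univ j))
        refine ⟨1, one_pos, fun u ⟨_, h2⟩ => ?_⟩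
        exfalso
        have hx0 := hmargin k (φ (rp p)) (hGamNe p hp)
        have hs1 : ∑ j, gN k j * φ (rp p) j = 0 :=
          Finset.sum_eq_zero fun j _ => by rw [hz j, zero_mul]
        have hs2 : ∑ j, |gN k j| = 0 := Finset.sum_eq_zero fun j _ => by rw [hz j, abs_zero]
        have hs3 : ∑ j, gN k j * u j = 0 :=
          Finset.sum_eq_zero fun j _ => by rw [hz j, zero_mul]
        rw [hs1, hs2] at hx0
        rw [hs3] at h2
        simp at hx0
        linarith
      set c3 : (FFW.PatIdx mm ⊕ (Unit ⊕ Unit ⊕ Unit)) → ℝ :=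
        Sum.elim (fun _ => 0)
          (Sum.elim (fun _ => 0) (Sum.elim (fun _ => -1) (fun _ => 1))) with hc3Def
      set A3 : (FFW.PatIdx mm ⊕ (Unit ⊕ Unit ⊕ Unit)) → Fin d → ℝ :=
        Sum.elim (fun e j => if s e = true then aa e.1 e.2.2 j - aa e.1 e.2.1 j else 0)
          (Sum.elim (fun _ j => -gN k j)
            (Sum.elim (fun _ j => aW j) (fun _ j => -(aW j)))) with hA3Def
      set b3 : (FFW.PatIdx mm ⊕ (Unit ⊕ Unit ⊕ Unit)) → ℝ :=
        Sum.elim (fun e => if s e = true then bb e.1 e.2.1 - bb e.1 e.2.2 else 0)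
          (Sum.elim (fun _ => -hN k) (Sum.elim (fun _ => -bW) (fun _ => bW))) with hb3Def
      obtain ⟨κ3, hκ3, c4, b4, h3d⟩ := FFW.proj1D c3 A3 b3
      have hggdiff : ∀ (e : FFW.PatIdx mm) (w : Fin d → ℝ),
          ∑ j, (aa e.1 e.2.2 j - aa e.1 e.2.1 j) * w j
            = (FFW.gg mm aa bb e.1 e.2.2 w - bb e.1 e.2.2)
              - (FFW.gg mm aa bb e.1 e.2.1 w - bb e.1 e.2.1) := by
        intro e w
        have h5 : ∀ j ∈ (Finset.univ : Finset (Fin d)),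
            (aa e.1 e.2.2 j - aa e.1 e.2.1 j) * w j
              = aa e.1 e.2.2 j * w j - aa e.1 e.2.1 j * w j := fun j _ => by ring
        rw [Finset.sum_congr rfl h5, Finset.sum_sub_distrib]
        simp only [FFW.gg]
        ring
      have htrans3 : ∀ t, (∀ k4, c4 k4 * t ≤ b4 k4) ↔
          ∃ w : Fin d → ℝ, w ∈ FFW.WSet mm aa bb s ∧ hN k ≤ ∑ j, gN k j * w j ∧
            (∑ j, aW j * w j) + bW = t := by
        intro t
        rw [h3d t]
        have hneg : ∀ (h w : Fin d → ℝ), ∑ j, -(h j) * w j = -(∑ j, h j * w j) := by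
          intro h w
          rw [← Finset.sum_neg_distrib]
          exact Finset.sum_congr rfl fun j _ => by ring
        constructor
        · rintro ⟨w, hw⟩
          refine ⟨w, ?_, ?_, ?_⟩
          · intro e he
            have h1 := hw (Sum.inl e)
            simp only [hc3Def, hA3Def, hb3Def, Sum.elim_inl, he, if_true, zero_mul,
              zero_add] at h1
            rw [hggdiff e w] at h1
            linarith
          · have h1 := hw (Sum.inr (Sum.inl ()))
            simp only [hc3Def, hA3Def, hb3Def, Sum.elim_inl, Sum.elim_inr, zero_mul,
              zero_add] at h1
            rw [hneg (gN k) w] at h1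
            linarith
          · have h1 := hw (Sum.inr (Sum.inr (Sum.inl ())))
            have h2 := hw (Sum.inr (Sum.inr (Sum.inr ())))
            simp only [hc3Def, hA3Def, hb3Def, Sum.elim_inl, Sum.elim_inr] at h1 h2
            rw [hneg aW w] at h2
            linarith
        · rintro ⟨w, hwW, hwH, hwV⟩
          refine ⟨w, fun i => ?_⟩
          rcases i with e | (u1 | (u2 | u3))
          · simp only [hc3Def, hA3Def, hb3Def, Sum.elim_inl, zero_mul, zero_add]
            by_cases he : s e = true
            · have hsum : ∑ x : Fin d,
                  (if s e = true then aa e.1 e.2.2 x - aa e.1 e.2.1 x else 0) * w x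
                    = ∑ x : Fin d, (aa e.1 e.2.2 x - aa e.1 e.2.1 x) * w x :=
                Finset.sum_congr rfl fun x _ => by rw [if_pos he]
              rw [if_pos he, hsum, hggdiff e w]
              have := hwW e he
              simp only [FFW.gg] at this ⊢
              linarith
            · have hsum : ∑ x : Fin d,
                  (if s e = true then aa e.1 e.2.2 x - aa e.1 e.2.1 x else 0) * w x = 0 :=
                Finset.sum_eq_zero fun x _ => by rw [if_neg he, zero_mul]
              rw [if_neg he, hsum]
          · simp only [hc3Def, hA3Def, hb3Def, Sum.elim_inl, Sum.elim_inr, zero_mul, zero_add]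
            rw [hneg (gN k) w]
            linarith
          · simp only [hc3Def, hA3Def, hb3Def, Sum.elim_inl, Sum.elim_inr]
            linarith
          · simp only [hc3Def, hA3Def, hb3Def, Sum.elim_inl, Sum.elim_inr]
            rw [hneg aW w]
            linarith
      have hpos3 : ∀ t, (∀ k4, c4 k4 * t ≤ b4 k4) → mv p < t := by
        intro t ht
        obtain ⟨w, hwW, hwH, hwV⟩ := (htrans3 t).mp ht
        have hval : elloss p (L w) = t := by rw [hrep w hwW, hwV]
        by_contra hle
        push_neg at hle
        have hwG : w ∈ Gam p := (hGamIff p hp w).mpr (by rw [hval]; exact hle)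
        have hm := hmargin k w hwG
        nlinarith [hgk, hε0]
      obtain ⟨α, hα1, hα2⟩ := FFW.oneDim c4 b4 (mv p) hpos3
      refine ⟨α - mv p, by linarith, fun u hu => ?_⟩
      obtain ⟨h1, h2⟩ := hu
      have h1' : FFW.patt mm aa bb u = s := h1
      have h2' : hN k < ∑ j, gN k j * u j := h2
      have huW : u ∈ FFW.WSet mm aa bb s := by
        rw [← h1']
        exact FFW.mem_WSet_patt_self mm aa bb u
      have hrows4 : ∀ k4, c4 k4 * (elloss p (L u)) ≤ b4 k4 := by
        apply (htrans3 _).mpr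
        exact ⟨u, huW, le_of_lt h2', (hrep u huW).symm⟩
      have := hα2 _ hrows4
      linarith
    obtain ⟨η, hη0, hηb⟩ := FFW.exists_pos_bound_of_finite
      (fun (sk : ((FFW.PatIdx mm → Bool) × κg)) (u : Fin d → ℝ) =>
        FFW.patt mm aa bb u = sk.1 ∧ hN sk.2 < ∑ j, gN sk.2 j * u j)
      (fun u => elloss p (L u)) (mv p) hcase
    refine ⟨η, hη0, fun u hnear => ?_⟩
    apply hηb
    have hk : ∃ k, hN k < ∑ j, gN k j * u j := by
      by_contra hno
      push_neg at hno
      obtain ⟨x, hx, hxn⟩ := (hmem u).mp (fun k => hno k)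
      exact hnear ⟨x, hx, fun j => le_trans (hxn j) (by linarith)⟩
    obtain ⟨k, hk⟩ := hk
    exact ⟨(FFW.patt mm aa bb u, k), rfl, hk⟩
  -- conclusion
  refine ⟨ψl, fun p hp => ?_⟩
  obtain ⟨η, hη0, hgap⟩ := hGap p hp
  refine ⟨η, hη0, fun u hbad => ?_⟩
  rw [hbayes p hp]
  exact hgap u (fun hnear => hbad (hψ u p hp hnear))
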